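/- arXiv:1405.7087 — 3 statements merged into one kernel-verified Lean document; each statement's English description precedes it below -/
import Mathlib

section
/- For every function ρ : ℕ → ℝ_{≥0} with ρ(j) → ∞ as j → ∞, there exists a function ρ' : ℝ_{≥0} → ℝ_{≥0} such that: ρ' is strictly increasing; ρ'(x+y) ≤ ρ'(x) + ρ'(y) for all x, y ≥ 0; ρ'(x) ≤ x/2 for all x ≥ 0; whenever ρ'(x) is a natural number, x is a natural number; ρ'(x) → ∞ as x → ∞; and ⌊ρ'(j)⌋ ≤ ⌊ρ(j)⌋ for every j ∈ ℕ. -/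
open Filter

/-- For every `ρ : ℕ → ℝ_{≥0}` with `ρ(j) → ∞`, there is `ρ' : ℝ_{≥0} → ℝ_{≥0}`
which is strictly increasing, subadditive, satisfies `ρ'(x) ≤ x/2`, whose preimage of `ℕ` is
contained in `ℕ`, which tends to infinity, and with `⌊ρ'(j)⌋ ≤ ⌊ρ(j)⌋` for every `j ∈ ℕ`. -/
theorem statement12 (ρ : ℕ → NNReal) (hρ : Tendsto ρ atTop atTop) :
    ∃ ρ' : NNReal → NNReal,
      StrictMono ρ' ∧
      (∀ x y : NNReal, ρ' (x + y) ≤ ρ' x + ρ' y) ∧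
      (∀ x : NNReal, ρ' x ≤ x / 2) ∧
      (∀ x : NNReal, (∃ m : ℕ, ρ' x = m) → ∃ m : ℕ, x = m) ∧
      Tendsto ρ' atTop atTop ∧
      (∀ j : ℕ, ⌊ρ' (j : NNReal)⌋₊ ≤ ⌊ρ j⌋₊) := by
  -- thresholds
  have hT : ∀ m : ℕ, ∃ N : ℕ, ∀ i, N ≤ i → (m : NNReal) ≤ ρ i := by
    intro m
    exact eventually_atTop.mp (hρ.eventually (eventually_ge_atTop (m : NNReal)))
  choose T hT using hT
  set K : ℕ → ℕ := fun m => m + (Finset.range (m+1)).sup T with hKdef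
  have hKmono : StrictMono K := by
    apply strictMono_nat_of_lt_succ
    intro n
    have : (Finset.range (n+1)).sup T ≤ (Finset.range (n+1+1)).sup T :=
      Finset.sup_mono (Finset.range_subset_range.mpr (by omega))
    simp only [hKdef]; omega
  have hTK : ∀ m, T m ≤ K m := by
    intro m
    have : T m ≤ (Finset.range (m+1)).sup T :=
      Finset.le_sup (Finset.self_mem_range_succ m)
    simp only [hKdef]; omega
  have hmK : ∀ m, m ≤ K m := fun m => Nat.le_add_right _ _
  -- intercepts
  set a : ℕ → ℕ := fun k => Nat.findGreatest (fun m => K m ≤ k) k with hadef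
  have ha0 : a 0 = 0 := rfl
  have hamono : Monotone a := by
    intro k l hkl
    exact Nat.findGreatest_mono (fun m hm => hm.trans hkl) hkl
  have haK : ∀ m, m ≤ a (K m) := by
    intro m
    exact Nat.le_findGreatest (hmK m) le_rfl
  have haKexact : ∀ m, a (K (m+1) - 1) = m := by
    intro m
    have h1 : K (m+1) ≥ m + 1 := hmK (m+1)
    apply le_antisymm
    · by_contra h
      push_neg at h
      have hpos : a (K (m+1) - 1) ≠ 0 := by omega
      have hspec : K (a (K (m+1) - 1)) ≤ K (m+1) - 1 :=
        (Nat.findGreatest_eq_iff.mp rfl).2.1 hpos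
      have : K (m+1) ≤ K (a (K (m+1) - 1)) := hKmono.le_iff_le.mpr (by omega)
      omega
    · apply Nat.le_findGreatest
      · have := hmK m
        have := hKmono (show m < m+1 by omega)
        omega
      · have := hKmono (show m < m+1 by omega)
        omega
  -- slopes
  set s : ℕ → NNReal := fun k => (2 ^ (k+1) : NNReal)⁻¹ with hsdef
  have hspos : ∀ k, 0 < s k := by
    intro k
    simp [hsdef, pos_iff_ne_zero]
  have hsanti : Antitone s := by
    intro k l hkl
    exact inv_anti₀ (by positivity) (pow_le_pow_right₀ one_le_two (by omega))
  set g : NNReal → ℕ → NNReal := fun x k => (a k : NNReal) + x * s k with hgdef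
  set f : NNReal → NNReal := fun x => ⨅ k, g x k with hfdef
  -- attainment
  have hatt : ∀ x : NNReal, ∃ k0, f x = g x k0 ∧ ∀ k, g x k0 ≤ g x k := by
    intro x
    set N := K (Nat.ceil x) with hN
    have hbig : ∀ k, N ≤ k → g x 0 ≤ g x k := by
      intro k hk
      have hs1 : s 0 ≤ 1 := by
        rw [hsdef]
        rw [← NNReal.coe_le_coe]
        push_cast
        norm_num
      have h1 : g x 0 ≤ x := by
        simp only [hgdef, ha0, Nat.cast_zero, zero_add]
        calc x * s 0 ≤ x * 1 := mul_le_mul_right hs1 x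
          _ = x := mul_one x
      have h2 : x ≤ (a k : NNReal) := by
        calc x ≤ (Nat.ceil x : NNReal) := Nat.le_ceil x
          _ ≤ (a N : NNReal) := by exact_mod_cast Nat.cast_le.mpr (haK _)
          _ ≤ (a k : NNReal) := Nat.cast_le.mpr (hamono hk)
      calc g x 0 ≤ (a k : NNReal) := h1.trans h2
        _ ≤ g x k := le_self_add
    obtain ⟨k0, hk0mem, hk0min⟩ := Finset.exists_min_image (Finset.range (N+1)) (g x)
      ⟨0, Finset.mem_range.mpr (by omega)⟩
    refine ⟨k0, ?_, ?_⟩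
    · apply le_antisymm
      · exact ciInf_le (OrderBot.bddBelow _) k0
      · apply le_ciInf
        intro k
        by_cases hk : k ≤ N
        · exact hk0min k (Finset.mem_range.mpr (by omega))
        · exact (hk0min 0 (Finset.mem_range.mpr (by omega))).trans (hbig k (by omega))
    · intro k
      by_cases hk : k ≤ N
      · exact hk0min k (Finset.mem_range.mpr (by omega))
      · exact (hk0min 0 (Finset.mem_range.mpr (by omega))).trans (hbig k (by omega))
  have hle : ∀ x k, f x ≤ g x k := fun x k => ciInf_le (OrderBot.bddBelow _) k
  -- strict mono
  have hsm : StrictMono f := by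
    intro x y hxy
    obtain ⟨k0, hval, -⟩ := hatt y
    calc f x ≤ g x k0 := hle x k0
      _ < g y k0 := by
          simp only [hgdef]
          exact add_lt_add_right (mul_lt_mul_of_pos_right hxy (hspos k0)) _
      _ = f y := hval.symm
  -- subadditive
  have hsub : ∀ x y : NNReal, f (x + y) ≤ f x + f y := by
    intro x y
    obtain ⟨j, hjval, -⟩ := hatt x
    obtain ⟨l, hlval, -⟩ := hatt y
    rcases le_total j l with hjl | hjl
    · calc f (x+y) ≤ g (x+y) l := hle _ l
        _ = (g y l + x * s l) := by simp only [hgdef]; ring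
        _ ≤ g y l + x * s j := add_le_add_right (mul_le_mul_right (hsanti hjl) x) _
        _ ≤ g y l + g x j := add_le_add_right le_add_self _
        _ = f x + f y := by rw [hjval, hlval]; ring
    · calc f (x+y) ≤ g (x+y) j := hle _ j
        _ = (g x j + y * s j) := by simp only [hgdef]; ring
        _ ≤ g x j + y * s l := add_le_add_right (mul_le_mul_right (hsanti hjl) y) _
        _ ≤ g x j + g y l := add_le_add_right le_add_self _
        _ = f x + f y := by rw [hjval, hlval]
  -- ≤ x/2
  have hhalf : ∀ x : NNReal, f x ≤ x / 2 := by
    intro x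
    calc f x ≤ g x 0 := hle x 0
      _ = x * (2 : NNReal)⁻¹ := by simp [hgdef, ha0, hsdef]
      _ = x / 2 := by rw [div_eq_mul_inv]
  -- preimage of ℕ
  have hpre : ∀ x : NNReal, (∃ m : ℕ, f x = m) → ∃ m : ℕ, x = m := by
    intro x ⟨m, hm⟩
    obtain ⟨k0, hval, -⟩ := hatt x
    rw [hval] at hm
    have ham : (a k0 : NNReal) ≤ m := by
      rw [← hm]; exact le_self_add
    have ham' : a k0 ≤ m := by exact_mod_cast ham
    refine ⟨(m - a k0) * 2 ^ (k0+1), ?_⟩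
    have hxs : x * s k0 = ((m - a k0 : ℕ) : NNReal) := by
      simp only [hgdef] at hm
      have : (a k0 : NNReal) + x * s k0 = (a k0 : NNReal) + ((m - a k0 : ℕ) : NNReal) := by
        rw [hm]
        push_cast [ham']
        exact (add_tsub_cancel_of_le ham).symm
      exact add_left_cancel this
    have h2 : ((2:NNReal) ^ (k0+1)) ≠ 0 := by positivity
    push_cast
    calc x = x * s k0 * 2 ^ (k0+1) := by
            rw [hsdef]
            field_simp
      _ = ((m - a k0 : ℕ) : NNReal) * 2 ^ (k0+1) := by rw [hxs]
      _ = ((m : NNReal) - (a k0 : NNReal)) * 2 ^ (k0+1) := by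
            push_cast [ham']
            ring
  -- tendsto
  have htend : Tendsto f atTop atTop := by
    rw [tendsto_atTop_atTop]
    intro M
    set N := K (Nat.ceil M) with hN
    refine ⟨(M * 2 ^ (N+1) : NNReal), fun x hx => ?_⟩
    apply le_ciInf
    intro k
    rcases le_total k N with hk | hk
    · calc M = M * 2 ^ (N+1) * s N := by
            simp only [hsdef]
            rw [mul_assoc, mul_inv_cancel₀ (by positivity), mul_one]
        _ ≤ x * s k := mul_le_mul' hx (hsanti hk)
        _ ≤ g x k := le_add_self
    · calc M ≤ (Nat.ceil M : NNReal) := Nat.le_ceil M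
        _ ≤ (a N : NNReal) := Nat.cast_le.mpr (haK _)
        _ ≤ (a k : NNReal) := Nat.cast_le.mpr (hamono hk)
        _ ≤ g x k := le_self_add
  -- floor condition
  have hfloor : ∀ j : ℕ, ⌊f (j : NNReal)⌋₊ ≤ ⌊ρ j⌋₊ := by
    intro j
    set m := ⌊ρ j⌋₊ with hm
    have hjT : j ≤ T (m+1) := by
      by_contra h
      push_neg at h
      have := hT (m+1) j (by omega)
      have : m + 1 ≤ ⌊ρ j⌋₊ := Nat.le_floor this
      omega
    have hmono : f (j : NNReal) ≤ f (T (m+1) : NNReal) :=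
      hsm.monotone (by exact_mod_cast Nat.cast_le.mpr hjT)
    have hKpos : 1 ≤ K (m+1) := le_trans (by omega) (hmK (m+1))
    set k := K (m+1) - 1 with hk
    have hak : a k = m := haKexact m
    have hTle : T (m+1) ≤ 2 ^ k := by
      have h1 : T (m+1) + (m+1) ≤ K (m+1) := by
        have : T (m+1) ≤ (Finset.range (m+1+1)).sup T :=
          Finset.le_sup (Finset.self_mem_range_succ (m+1))
        simp only [hKdef]; omega
      have h2 : k < 2 ^ k := Nat.lt_two_pow_self
      omega
    have hval : f (T (m+1) : NNReal) ≤ (m : NNReal) + 1/2 := by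
      calc f (T (m+1) : NNReal) ≤ g (T (m+1) : NNReal) k := hle _ k
        _ = (m : NNReal) + (T (m+1) : NNReal) * s k := by rw [hgdef]; simp [hak]
        _ ≤ (m : NNReal) + (2 ^ k : NNReal) * s k := by
              apply add_le_add_right
              apply mul_le_mul_left
              exact_mod_cast Nat.cast_le.mpr hTle
        _ = (m : NNReal) + 1/2 := by
              congr 1
              simp only [hsdef]
              rw [pow_succ]
              rw [mul_inv, ← mul_assoc, mul_inv_cancel₀ (by positivity), one_mul]
              rw [one_div]
    have : f (j : NNReal) < (m : NNReal) + 1 := by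
      calc f (j : NNReal) ≤ (m : NNReal) + 1/2 := hmono.trans hval
        _ < (m : NNReal) + 1 := by
            apply add_lt_add_right
            rw [← NNReal.coe_lt_coe]
            norm_num
    have : ⌊f (j : NNReal)⌋₊ < m + 1 := by
      rw [Nat.floor_lt zero_le]
      push_cast
      exact this
    omega
  exact ⟨f, hsm, hsub, hhalf, hpre, htend, hfloor⟩
end

section
/- Let M be a commutative monoid and let g : ι → M be a family indexed by a finite type ι such that the submonoid generated by the range of g is all of M. Let m = ∏_{i ∈ ι} g(i). Then every element of the localization of M at the submonoid of powers of m is invertible; that is, this localization is a group. -/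
/-- Let `M` be a commutative monoid generated by the range of a family
`g : ι → M` indexed by a finite type, and let `m = ∏ i, g i`. Then every element of the
localization of `M` at the submonoid of powers of `m` is invertible; that is, this
localization is a group. -/
theorem statement13 (M : Type) [CommMonoid M] (ι : Type) [Fintype ι] (g : ι → M)
    (hgen : Submonoid.closure (Set.range g) = ⊤)
    (x : Localization (Submonoid.powers (∏ i : ι, g i))) :
    IsUnit x := by
  classical
  let f := (Localization.monoidOf (Submonoid.powers (∏ i : ι, g i))).toMonoidHom
  have hfm : IsUnit (f (∏ i : ι, g i)) :=
    (Localization.monoidOf (Submonoid.powers (∏ i : ι, g i))).map_units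
      ⟨∏ i : ι, g i, Submonoid.mem_powers _⟩
  have hfg : ∀ i, IsUnit (f (g i)) := by
    intro i
    have h : f (g i) * f (∏ j ∈ Finset.univ.erase i, g j) = f (∏ i : ι, g i) := by
      rw [← map_mul]
      exact congrArg f (Finset.mul_prod_erase Finset.univ g (Finset.mem_univ i))
    exact isUnit_of_mul_isUnit_left (h ▸ hfm)
  have hall : ∀ a : M, IsUnit (f a) := by
    intro a
    have ha : a ∈ Submonoid.closure (Set.range g) := by rw [hgen]; trivial
    induction ha using Submonoid.closure_induction with
    | mem y hy => obtain ⟨i, rfl⟩ := hy; exact hfg i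
    | one => simp
    | mul y z _ _ hy hz => rw [map_mul]; exact hy.mul hz
  refine Localization.induction_on x ?_
  rintro ⟨a, s⟩
  have h1 : Localization.mk a s * Localization.mk (s : M) 1 = Localization.mk a 1 := by
    calc Localization.mk a s * Localization.mk (s : M) 1
        = Localization.mk (a * (s : M)) (s * 1) := Localization.mk_mul a (s : M) s 1
      _ = Localization.mk a 1 * Localization.mk (s : M) s := by
          rw [Localization.mk_mul, mul_comm s 1]
      _ = Localization.mk a 1 := by rw [Localization.mk_self, mul_one]
  have ha : IsUnit (Localization.mk a (1 : Submonoid.powers (∏ i : ι, g i))) := by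
    rw [Localization.mk_one_eq_monoidOf_mk]; exact hall a
  exact isUnit_of_mul_isUnit_left
    (show IsUnit (Localization.mk a s * Localization.mk (s : M) 1) from h1 ▸ ha)
end

section
/- For every k ∈ ℕ and every homotopy equivalence h : X → Y of topological spaces, the induced map Sym_k(h) : Sym_k(X) → Sym_k(Y), which applies h to each point of a multiset, is a homotopy equivalence. -/
noncomputable section

/-- The setoid on `Fin k → α` identifying tuples up to permutation. -/
def permSetoid (α : Type) (k : ℕ) : Setoid (Fin k → α) where
  r f g := ∃ σ : Equiv.Perm (Fin k), f ∘ σ = g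
  iseqv := by
    refine ⟨fun f => ⟨Equiv.refl _, rfl⟩, ?_, ?_⟩
    · rintro f g ⟨σ, rfl⟩
      exact ⟨σ.symm, by ext i; simp⟩
    · rintro f g h ⟨σ, rfl⟩ ⟨τ, rfl⟩
      exact ⟨τ.trans σ, rfl⟩

/-- The `k`-th symmetric power of a topological space: the quotient of `X^k` by the
permutation action of the symmetric group `S_k`, with the quotient topology. -/
def SymPow (α : Type) [TopologicalSpace α] (k : ℕ) : Type :=
  Quotient (permSetoid α k)

instance (α : Type) [TopologicalSpace α] (k : ℕ) : TopologicalSpace (SymPow α k) :=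
  inferInstanceAs (TopologicalSpace (Quotient (permSetoid α k)))

/-- The point of `SymPow α k` determined by a `k`-tuple. -/
def SymPow.mk {α : Type} [TopologicalSpace α] {k : ℕ} (f : Fin k → α) : SymPow α k :=
  Quotient.mk (permSetoid α k) f

/-- The continuous map `Sym_k(h) : Sym_k(X) → Sym_k(Y)` induced by a continuous map
`h : X → Y`, applying `h` to each point of a multiset. -/
def SymPow.map {α β : Type} [TopologicalSpace α] [TopologicalSpace β] {k : ℕ}
    (h : C(α, β)) : C(SymPow α k, SymPow β k) where
  toFun := Quotient.lift (fun f => SymPow.mk (⇑h ∘ f)) (by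
    rintro f g ⟨σ, rfl⟩
    exact Quotient.sound ⟨σ, rfl⟩)
  continuous_toFun := by
    apply continuous_quot_lift
    exact continuous_quot_mk.comp
      (continuous_pi fun i => h.continuous.comp (continuous_apply i))

section Aux

open ContinuousMap

variable {α β : Type} [TopologicalSpace α] [TopologicalSpace β] {k : ℕ}

lemma symPow_mk_openQuotient :
    IsOpenQuotientMap (fun f : Fin k → α => SymPow.mk f) := by
  refine ⟨Quotient.exists_rep, continuous_quot_mk, fun U hU => ?_⟩
  apply (isOpen_coinduced (f := Quotient.mk (permSetoid α k))).mpr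
  have : (Quotient.mk (permSetoid α k)) ⁻¹' ((fun f : Fin k → α => SymPow.mk f) '' U)
      = ⋃ σ : Equiv.Perm (Fin k), (fun g : Fin k → α => g ∘ σ) ⁻¹' U := by
    ext g
    simp only [Set.mem_preimage, Set.mem_image, Set.mem_iUnion]
    constructor
    · rintro ⟨f, hf, hfg⟩
      obtain ⟨σ, hσ⟩ := Quotient.exact hfg
      exact ⟨σ.symm, by rwa [show g ∘ σ.symm = f by rw [← hσ]; ext i; simp]⟩
    · rintro ⟨σ, hσ⟩
      exact ⟨g ∘ σ, hσ, Quotient.sound ⟨σ.symm, by ext i; simp⟩⟩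
  refine (congrArg IsOpen this).mpr ?_
  exact isOpen_iUnion fun σ =>
    hU.preimage (continuous_pi fun i => continuous_apply (σ i))

/-- Homotopies descend to symmetric powers. -/
def SymPow.mapHomotopy {f g : C(α, β)} (F : f.Homotopy g) :
    (SymPow.map (k := k) f).Homotopy (SymPow.map g) where
  toFun := fun p => Quotient.lift
    (fun v : Fin k → α => SymPow.mk (fun i => F (p.1, v i)))
    (by rintro v w ⟨σ, rfl⟩; exact Quotient.sound ⟨σ, rfl⟩) p.2
  continuous_toFun := by
    have hq : IsOpenQuotientMap
        (Prod.map (id : unitInterval → unitInterval)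
          (fun f : Fin k → α => SymPow.mk f)) :=
      IsOpenQuotientMap.id.prodMap symPow_mk_openQuotient
    rw [← hq.continuous_comp_iff]
    exact continuous_quot_mk.comp <| continuous_pi fun i =>
      F.continuous.comp (continuous_fst.prodMk ((continuous_apply i).comp continuous_snd))
  map_zero_left x := by
    induction x using Quotient.ind
    exact congrArg (Quotient.mk _) (by ext i; simp)
  map_one_left x := by
    induction x using Quotient.ind
    exact congrArg (Quotient.mk _) (by ext i; simp)

lemma SymPow.map_comp {γ : Type} [TopologicalSpace γ] (f : C(α, β)) (g : C(β, γ)) :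
    (SymPow.map (k := k) g).comp (SymPow.map f) = SymPow.map (g.comp f) := by
  ext x
  induction x using Quotient.ind
  rfl

lemma SymPow.map_id : SymPow.map (k := k) (ContinuousMap.id α) = ContinuousMap.id _ := by
  ext x
  induction x using Quotient.ind
  rfl

end Aux

/-- for every `k ∈ ℕ` and every homotopy equivalence `h : X → Y` of topological
spaces, the induced map `Sym_k(h) : Sym_k(X) → Sym_k(Y)` is a homotopy equivalence. -/
theorem statement15 (k : ℕ) (X Y : Type) [TopologicalSpace X] [TopologicalSpace Y]
    (h : ContinuousMap.HomotopyEquiv X Y) :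
    ∃ e : ContinuousMap.HomotopyEquiv (SymPow X k) (SymPow Y k),
      e.toFun = SymPow.map h.toFun := by
  refine ⟨⟨SymPow.map h.toFun, SymPow.map h.invFun, ?_, ?_⟩, rfl⟩
  · rw [SymPow.map_comp, ← SymPow.map_id (α := X)]
    obtain ⟨F⟩ := h.left_inv
    exact ⟨SymPow.mapHomotopy F⟩
  · rw [SymPow.map_comp, ← SymPow.map_id (α := Y)]
    obtain ⟨F⟩ := h.right_inv
    exact ⟨SymPow.mapHomotopy F⟩
end
end
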